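/- For every real p with 0 < p < 1/2, there exist infinitely many positive integers n such that v_n(p) < v_{n-1}(p) + 1. -/

import Mathlib

/-- `v p n` is the optimal expected number of heads in the coin game with `n` coins,
each landing heads with probability `p`. -/
noncomputable def v (p : ℝ) : ℕ → ℝ
  | 0 => 0
  | n + 1 =>
      ((n : ℝ) + 1) * p ^ (n + 1) + v p n * (1 - p) ^ (n + 1) +
        ∑ j ∈ (Finset.Icc 1 n).attach,
          (((n + 1).choose j.1 : ℕ) : ℝ) * p ^ (j.1 : ℕ) * (1 - p) ^ (n + 1 - j.1) *
            ((Finset.Icc 1 j.1).attach.sup'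
              (Finset.attach_nonempty_iff.mpr
                (Finset.nonempty_Icc.mpr (Finset.mem_Icc.mp j.2).1))
              (fun i => v p (n + 1 - i.1) + (i.1 : ℝ)))
decreasing_by
  · omega
  · have h := (Finset.mem_Icc.mp i.2).1
    omega

/-- `s p n = v p n - n + 1 - p`. -/
noncomputable def s (p : ℝ) (n : ℕ) : ℝ := v p n - n + 1 - p

open Finset

private lemma sum_shape (n : ℕ) (f : ℕ → ℝ) :
    ∑ k ∈ range (n + 2), f k = f 0 + f (n + 1) + ∑ j ∈ Icc 1 n, f j := by
  have h : range (n + 2) = insert 0 (insert (n + 1) (Icc 1 n)) := by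
    ext x; simp only [mem_range, mem_insert, mem_Icc]; omega
  have h0 : (0 : ℕ) ∉ insert (n + 1) (Icc 1 n) := by
    simp only [mem_insert, mem_Icc]; omega
  have h1 : (n + 1) ∉ Icc 1 n := by simp
  rw [h, Finset.sum_insert h0, Finset.sum_insert h1]
  ring

private lemma sum_binom (p : ℝ) (n : ℕ) :
    ∑ j ∈ Icc 1 n, (((n + 1).choose j : ℕ) : ℝ) * p ^ j * (1 - p) ^ (n + 1 - j)
      = 1 - p ^ (n + 1) - (1 - p) ^ (n + 1) := by
  have hb : (1 : ℝ) = ∑ k ∈ range (n + 2), p ^ k * (1 - p) ^ (n + 1 - k) * ((n + 1).choose k : ℕ) := by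
    calc (1 : ℝ) = (p + (1 - p)) ^ (n + 1) := by ring
    _ = ∑ k ∈ range (n + 1 + 1), p ^ k * (1 - p) ^ (n + 1 - k) * ((n + 1).choose k : ℕ) :=
        add_pow p (1 - p) (n + 1)
  rw [sum_shape n (fun k => p ^ k * (1 - p) ^ (n + 1 - k) * ((n + 1).choose k : ℕ))] at hb
  simp only [pow_zero, Nat.sub_zero, Nat.choose_zero_right, Nat.choose_self, Nat.sub_self,
    Nat.cast_one, one_mul, mul_one] at hb
  have hc : ∑ j ∈ Icc 1 n, (((n + 1).choose j : ℕ) : ℝ) * p ^ j * (1 - p) ^ (n + 1 - j)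
      = ∑ j ∈ Icc 1 n, p ^ j * (1 - p) ^ (n + 1 - j) * ((n + 1).choose j : ℕ) :=
    Finset.sum_congr rfl fun j _ => by ring
  rw [hc]
  linarith

private lemma v_nonneg (p : ℝ) (hp0 : 0 ≤ p) (hp1 : p ≤ 1) : ∀ n, 0 ≤ v p n := by
  intro n
  induction n using Nat.strong_induction_on with
  | _ n ih =>
    match n with
    | 0 => rw [v]
    | Nat.succ n =>
      rw [v]
      have hq : (0 : ℝ) ≤ 1 - p := by linarith
      have h1 : (0 : ℝ) ≤ ((n : ℝ) + 1) * p ^ (n + 1) := by positivity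
      have h2 : (0 : ℝ) ≤ v p n * (1 - p) ^ (n + 1) :=
        mul_nonneg (ih n (by omega)) (by positivity)
      have h3 : (0 : ℝ) ≤ ∑ j ∈ (Icc 1 n).attach,
          (((n + 1).choose j.1 : ℕ) : ℝ) * p ^ (j.1 : ℕ) * (1 - p) ^ (n + 1 - j.1) *
            ((Icc 1 j.1).attach.sup'
              (Finset.attach_nonempty_iff.mpr
                (Finset.nonempty_Icc.mpr (Finset.mem_Icc.mp j.2).1))
              (fun i => v p (n + 1 - i.1) + (i.1 : ℝ))) := by
        apply Finset.sum_nonneg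
        intro j _
        apply mul_nonneg
        · exact mul_nonneg (mul_nonneg (Nat.cast_nonneg _) (pow_nonneg hp0 _)) (pow_nonneg hq _)
        · have hj1 : (1 : ℕ) ∈ Icc 1 j.1 := by
            rw [mem_Icc]; exact ⟨le_refl 1, (Finset.mem_Icc.mp j.2).1⟩
          have := Finset.le_sup'
            (f := fun i : {x // x ∈ Icc 1 j.1} => v p (n + 1 - i.1) + (i.1 : ℝ))
            (Finset.mem_attach _ (⟨1, hj1⟩ : {x // x ∈ Icc 1 j.1}))
          simp only [Nat.add_sub_cancel] at this
          have hvn : 0 ≤ v p n := ih n (by omega)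
          refine le_trans ?_ this
          push_cast
          linarith
      linarith

private lemma v_le (p : ℝ) (hp0 : 0 ≤ p) (hp1 : p ≤ 1) : ∀ n, v p n ≤ n := by
  intro n
  induction n using Nat.strong_induction_on with
  | _ n ih =>
    match n with
    | 0 => rw [v]; norm_num
    | Nat.succ n =>
      rw [v]
      have hq : (0 : ℝ) ≤ 1 - p := by linarith
      have hsum : (∑ j ∈ (Icc 1 n).attach,
          (((n + 1).choose j.1 : ℕ) : ℝ) * p ^ (j.1 : ℕ) * (1 - p) ^ (n + 1 - j.1) *
            ((Icc 1 j.1).attach.sup'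
              (Finset.attach_nonempty_iff.mpr
                (Finset.nonempty_Icc.mpr (Finset.mem_Icc.mp j.2).1))
              (fun i => v p (n + 1 - i.1) + (i.1 : ℝ))))
          ≤ ∑ j ∈ Icc 1 n,
            (((n + 1).choose j : ℕ) : ℝ) * p ^ j * (1 - p) ^ (n + 1 - j) * ((n : ℝ) + 1) := by
        calc (∑ j ∈ (Icc 1 n).attach,
            (((n + 1).choose j.1 : ℕ) : ℝ) * p ^ (j.1 : ℕ) * (1 - p) ^ (n + 1 - j.1) *
              ((Icc 1 j.1).attach.sup'
                (Finset.attach_nonempty_iff.mpr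
                  (Finset.nonempty_Icc.mpr (Finset.mem_Icc.mp j.2).1))
                (fun i => v p (n + 1 - i.1) + (i.1 : ℝ))))
            ≤ ∑ j ∈ (Icc 1 n).attach,
              (fun jj : ℕ => (((n + 1).choose jj : ℕ) : ℝ) * p ^ jj * (1 - p) ^ (n + 1 - jj)
                * ((n : ℝ) + 1)) j.1 := by
              apply Finset.sum_le_sum
              intro j _
              apply mul_le_mul_of_nonneg_left
              · apply Finset.sup'_le
                intro i _
                obtain ⟨hi1, hi2⟩ := Finset.mem_Icc.mp i.2
                obtain ⟨hj1, hj2⟩ := Finset.mem_Icc.mp j.2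
                have h1 : v p (n + 1 - i.1) ≤ ((n + 1 - i.1 : ℕ) : ℝ) := ih _ (by omega)
                have h2 : ((n + 1 - i.1 : ℕ) : ℝ) = ((n : ℝ) + 1) - (i.1 : ℝ) := by
                  rw [Nat.cast_sub (by omega)]; push_cast; ring
                rw [h2] at h1
                linarith
              · exact mul_nonneg (mul_nonneg (Nat.cast_nonneg _) (pow_nonneg hp0 _))
                  (pow_nonneg hq _)
          _ = ∑ j ∈ Icc 1 n,
              (((n + 1).choose j : ℕ) : ℝ) * p ^ j * (1 - p) ^ (n + 1 - j) * ((n : ℝ) + 1) :=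
            Finset.sum_attach _ (fun jj : ℕ => (((n + 1).choose jj : ℕ) : ℝ) * p ^ jj
              * (1 - p) ^ (n + 1 - jj) * ((n : ℝ) + 1))
      have hval : ∑ j ∈ Icc 1 n,
          (((n + 1).choose j : ℕ) : ℝ) * p ^ j * (1 - p) ^ (n + 1 - j) * ((n : ℝ) + 1)
          = (1 - p ^ (n + 1) - (1 - p) ^ (n + 1)) * ((n : ℝ) + 1) := by
        rw [← Finset.sum_mul, sum_binom]
      have hvn : v p n ≤ n := ih n (by omega)
      have hq1 : (0 : ℝ) ≤ (1 - p) ^ (n + 1) := pow_nonneg hq _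
      have hp1' : (0 : ℝ) ≤ p ^ (n + 1) := pow_nonneg hp0 _
      have hmul : v p n * (1 - p) ^ (n + 1) ≤ ((n : ℝ) + 1) * (1 - p) ^ (n + 1) :=
        mul_le_mul_of_nonneg_right (by linarith) hq1
      push_cast
      nlinarith [hsum, hval]

private lemma v_chain (p : ℝ) (N : ℕ) (hm : ∀ n, N ≤ n → v p (n - 1) + 1 ≤ v p n) :
    ∀ (k m : ℕ), N ≤ m → v p m + (k : ℝ) ≤ v p (m + k) := by
  intro k
  induction k with
  | zero => intro m _; simp
  | succ k ih =>
    intro m hmN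
    have h1 := ih m hmN
    have h2 : v p (m + k) + 1 ≤ v p (m + k + 1) := by
      have := hm (m + k + 1) (by omega)
      simpa using this
    have hidx : m + (k + 1) = m + k + 1 := by omega
    rw [hidx]
    push_cast
    linarith

private lemma key (p : ℝ) (hp1 : 0 < p) (hp2 : p < 1 / 2) (N : ℕ) (hN1 : 1 ≤ N)
    (hm : ∀ n, N ≤ n → v p (n - 1) + 1 ≤ v p n) : False := by
  have hp0 : (0 : ℝ) ≤ p := le_of_lt hp1
  have hple : p ≤ 1 := by linarith
  have hq0 : (0 : ℝ) < 1 - p := by linarith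
  set r : ℝ := p / (1 - p) with hrdef
  have hr0 : 0 < r := div_pos hp1 hq0
  have hr1 : r < 1 := (div_lt_one hq0).mpr (by linarith)
  -- choose m with the decisive smallness property
  have h0 : Filter.Tendsto (fun k : ℕ => (k : ℝ) ^ N * r ^ k) Filter.atTop (nhds 0) :=
    (summable_pow_mul_geometric_of_norm_lt_one (R := ℝ) N
      (by rw [Real.norm_eq_abs, abs_of_pos hr0]; exact hr1)).tendsto_atTop_zero
  have h1 : Filter.Tendsto (fun m : ℕ => ((m + (N + 1) : ℕ) : ℝ) ^ N * r ^ (m + (N + 1)))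
      Filter.atTop (nhds 0) := h0.comp (Filter.tendsto_add_atTop_nat (N + 1))
  have h2 : Filter.Tendsto
      (fun m : ℕ => ((1 + (N : ℝ) / (1 - p) ^ (N - 1)) / r ^ (N + 1)) *
        (((m + (N + 1) : ℕ) : ℝ) ^ N * r ^ (m + (N + 1)))) Filter.atTop (nhds 0) := by
    simpa using h1.const_mul ((1 + (N : ℝ) / (1 - p) ^ (N - 1)) / r ^ (N + 1))
  obtain ⟨m, hm0⟩ := (h2.eventually (gt_mem_nhds (by norm_num : (0 : ℝ) < 1))).exists
  have hrpow : (0 : ℝ) < r ^ (N + 1) := pow_pos hr0 _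
  set n := N + m with hn
  have hmkey : (1 + (N : ℝ) / (1 - p) ^ (N - 1)) * (((n : ℝ) + 1) ^ N * r ^ m) < 1 := by
    have heq : ((1 + (N : ℝ) / (1 - p) ^ (N - 1)) / r ^ (N + 1)) *
        (((m + (N + 1) : ℕ) : ℝ) ^ N * r ^ (m + (N + 1)))
        = (1 + (N : ℝ) / (1 - p) ^ (N - 1)) * (((n : ℝ) + 1) ^ N * r ^ m) := by
      rw [pow_add]
      push_cast [hn]
      have hcongr : ((m : ℝ) + ((N : ℝ) + 1)) ^ N = ((N : ℝ) + (m : ℝ) + 1) ^ N := by ring_nf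
      rw [hcongr]
      field_simp
      ring
    rw [heq] at hm0
    exact hm0
  -- basic facts
  have hn1 : (1 : ℝ) ≤ (n : ℝ) + 1 := by
    have := Nat.cast_nonneg (α := ℝ) n
    linarith
  have hq1 : (0 : ℝ) ≤ (1 - p) ^ (n + 1) := by positivity
  have hvn0 : 0 ≤ v p n := v_nonneg p hp0 hple n
  -- the step bound
  have hstep : v p (n + 1) ≤ ((n : ℝ) + 1) * p ^ (n + 1) + v p n * (1 - p) ^ (n + 1) +
      ∑ j ∈ Icc 1 n, (((n + 1).choose j : ℕ) : ℝ) * p ^ j * (1 - p) ^ (n + 1 - j) *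
        (v p n + 1 + if m + 2 ≤ j then (n : ℝ) else 0) := by
    rw [v]
    apply add_le_add_right
    calc (∑ j ∈ (Icc 1 n).attach,
        (((n + 1).choose j.1 : ℕ) : ℝ) * p ^ (j.1 : ℕ) * (1 - p) ^ (n + 1 - j.1) *
          ((Icc 1 j.1).attach.sup'
            (Finset.attach_nonempty_iff.mpr
              (Finset.nonempty_Icc.mpr (Finset.mem_Icc.mp j.2).1))
            (fun i => v p (n + 1 - i.1) + (i.1 : ℝ))))
        ≤ ∑ j ∈ (Icc 1 n).attach,
          (fun jj : ℕ => (((n + 1).choose jj : ℕ) : ℝ) * p ^ jj * (1 - p) ^ (n + 1 - jj) *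
            (v p n + 1 + if m + 2 ≤ jj then (n : ℝ) else 0)) j.1 := by
          apply Finset.sum_le_sum
          intro j _
          apply mul_le_mul_of_nonneg_left
          · apply Finset.sup'_le
            intro i _
            obtain ⟨hi1, hi2⟩ := Finset.mem_Icc.mp i.2
            obtain ⟨hj1, hj2⟩ := Finset.mem_Icc.mp j.2
            by_cases hcase : i.1 ≤ m + 1
            · have hNle : N ≤ n + 1 - i.1 := by omega
              have hch := v_chain p N hm (i.1 - 1) (n + 1 - i.1) hNle
              have hidx : n + 1 - i.1 + (i.1 - 1) = n := by omega
              rw [hidx] at hch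
              have hcast : ((i.1 - 1 : ℕ) : ℝ) = (i.1 : ℝ) - 1 := by
                rw [Nat.cast_sub hi1]; norm_num
              rw [hcast] at hch
              have hite : (0 : ℝ) ≤ if m + 2 ≤ j.1 then (n : ℝ) else 0 := by
                split
                · exact Nat.cast_nonneg n
                · exact le_refl 0
              linarith
            · have hj2' : m + 2 ≤ j.1 := by omega
              rw [if_pos hj2']
              have h1 : v p (n + 1 - i.1) ≤ ((n + 1 - i.1 : ℕ) : ℝ) := v_le p hp0 hple _
              have h2 : ((n + 1 - i.1 : ℕ) : ℝ) = ((n : ℝ) + 1) - (i.1 : ℝ) := by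
                rw [Nat.cast_sub (by omega)]; push_cast; ring
              rw [h2] at h1
              linarith
          · exact mul_nonneg (mul_nonneg (Nat.cast_nonneg _) (pow_nonneg hp0 _))
              (pow_nonneg (le_of_lt hq0) _)
      _ = ∑ j ∈ Icc 1 n, (((n + 1).choose j : ℕ) : ℝ) * p ^ j * (1 - p) ^ (n + 1 - j) *
          (v p n + 1 + if m + 2 ≤ j then (n : ℝ) else 0) :=
        Finset.sum_attach _ (fun jj : ℕ => (((n + 1).choose jj : ℕ) : ℝ) * p ^ jj *
          (1 - p) ^ (n + 1 - jj) * (v p n + 1 + if m + 2 ≤ jj then (n : ℝ) else 0))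
  -- split the sum
  have hsplit : ∑ j ∈ Icc 1 n, (((n + 1).choose j : ℕ) : ℝ) * p ^ j * (1 - p) ^ (n + 1 - j) *
      (v p n + 1 + if m + 2 ≤ j then (n : ℝ) else 0)
      = (1 - p ^ (n + 1) - (1 - p) ^ (n + 1)) * (v p n + 1) +
        ∑ j ∈ Icc (m + 2) n, (((n + 1).choose j : ℕ) : ℝ) * p ^ j * (1 - p) ^ (n + 1 - j) * (n : ℝ) := by
    have e1 : ∑ j ∈ Icc 1 n, (((n + 1).choose j : ℕ) : ℝ) * p ^ j * (1 - p) ^ (n + 1 - j) *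
        (v p n + 1 + if m + 2 ≤ j then (n : ℝ) else 0)
        = ∑ j ∈ Icc 1 n, ((((n + 1).choose j : ℕ) : ℝ) * p ^ j * (1 - p) ^ (n + 1 - j) * (v p n + 1)
          + (if m + 2 ≤ j then (((n + 1).choose j : ℕ) : ℝ) * p ^ j * (1 - p) ^ (n + 1 - j) * (n : ℝ) else 0)) :=
      Finset.sum_congr rfl fun j _ => by split <;> ring
    rw [e1, Finset.sum_add_distrib, ← Finset.sum_filter]
    have e2 : (Icc 1 n).filter (fun j => m + 2 ≤ j) = Icc (m + 2) n := by
      ext x; simp only [mem_filter, mem_Icc]; omega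
    rw [e2, ← Finset.sum_mul, sum_binom]
  -- bound the tail sum
  have htail : ∑ j ∈ Icc (m + 2) n, (((n + 1).choose j : ℕ) : ℝ) * p ^ j * (1 - p) ^ (n + 1 - j) * (n : ℝ)
      ≤ (N : ℝ) * (((n : ℝ) + 1) ^ (N - 1) * p ^ (m + 2) * (n : ℝ)) := by
    have hbound : ∀ j ∈ Icc (m + 2) n,
        (((n + 1).choose j : ℕ) : ℝ) * p ^ j * (1 - p) ^ (n + 1 - j) * (n : ℝ)
        ≤ ((n : ℝ) + 1) ^ (N - 1) * p ^ (m + 2) * (n : ℝ) := by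
      intro j hj
      obtain ⟨hj1, hj2⟩ := mem_Icc.mp hj
      have hch : ((n + 1).choose j : ℝ) ≤ ((n : ℝ) + 1) ^ (N - 1) := by
        have h1 : (n + 1).choose j = (n + 1).choose (n + 1 - j) :=
          (Nat.choose_symm (by omega)).symm
        have h2 : (n + 1).choose (n + 1 - j) ≤ (n + 1) ^ (n + 1 - j) := Nat.choose_le_pow _ _
        have h3 : (n + 1) ^ (n + 1 - j) ≤ (n + 1) ^ (N - 1) :=
          Nat.pow_le_pow_right (by omega) (by omega)
        calc ((n + 1).choose j : ℝ) = (((n + 1).choose (n + 1 - j) : ℕ) : ℝ) := by rw [← h1]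
        _ ≤ (((n + 1) ^ (N - 1) : ℕ) : ℝ) := by exact_mod_cast le_trans h2 h3
        _ = ((n : ℝ) + 1) ^ (N - 1) := by push_cast; ring
      have hpj : p ^ j ≤ p ^ (m + 2) := pow_le_pow_of_le_one hp0 hple hj1
      have hqj : (1 - p) ^ (n + 1 - j) ≤ 1 := pow_le_one₀ (le_of_lt hq0) (by linarith)
      have hq2 : (0 : ℝ) ≤ (1 - p) ^ (n + 1 - j) := pow_nonneg (le_of_lt hq0) _
      have s1 : (((n + 1).choose j : ℕ) : ℝ) * p ^ j ≤ ((n : ℝ) + 1) ^ (N - 1) * p ^ (m + 2) :=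
        mul_le_mul hch hpj (pow_nonneg hp0 _) (by positivity)
      have s2 : (((n + 1).choose j : ℕ) : ℝ) * p ^ j * (1 - p) ^ (n + 1 - j)
          ≤ ((n : ℝ) + 1) ^ (N - 1) * p ^ (m + 2) := by
        calc (((n + 1).choose j : ℕ) : ℝ) * p ^ j * (1 - p) ^ (n + 1 - j)
            ≤ (((n + 1).choose j : ℕ) : ℝ) * p ^ j * 1 :=
              mul_le_mul_of_nonneg_left hqj (mul_nonneg (Nat.cast_nonneg _) (pow_nonneg hp0 _))
          _ = (((n + 1).choose j : ℕ) : ℝ) * p ^ j := mul_one _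
          _ ≤ ((n : ℝ) + 1) ^ (N - 1) * p ^ (m + 2) := s1
      exact mul_le_mul_of_nonneg_right s2 (Nat.cast_nonneg n)
    calc ∑ j ∈ Icc (m + 2) n, (((n + 1).choose j : ℕ) : ℝ) * p ^ j * (1 - p) ^ (n + 1 - j) * (n : ℝ)
        ≤ (Icc (m + 2) n).card • (((n : ℝ) + 1) ^ (N - 1) * p ^ (m + 2) * (n : ℝ)) :=
          Finset.sum_le_card_nsmul _ _ _ hbound
      _ = ((Icc (m + 2) n).card : ℝ) * (((n : ℝ) + 1) ^ (N - 1) * p ^ (m + 2) * (n : ℝ)) := by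
          rw [nsmul_eq_mul]
      _ ≤ (N : ℝ) * (((n : ℝ) + 1) ^ (N - 1) * p ^ (m + 2) * (n : ℝ)) := by
          apply mul_le_mul_of_nonneg_right
          · exact_mod_cast (by rw [Nat.card_Icc]; omega : (Icc (m + 2) n).card ≤ N)
          · positivity
  -- main inequality from the monotonicity hypothesis
  have hv1 : v p n + 1 ≤ v p (n + 1) := by
    have := hm (n + 1) (by omega)
    simpa using this
  -- bound the two error terms by the geometric quantity
  have hpeq : p ^ (n + 1) = r ^ (n + 1) * (1 - p) ^ (n + 1) := by
    rw [← mul_pow]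
    congr 1
    rw [hrdef]
    field_simp
  have hA : ((n : ℝ) + 1) * p ^ (n + 1) ≤ ((n : ℝ) + 1) ^ N * r ^ m * (1 - p) ^ (n + 1) := by
    rw [hpeq]
    have t1 : ((n : ℝ) + 1) ≤ ((n : ℝ) + 1) ^ N := le_self_pow₀ hn1 (by omega)
    have t2 : r ^ (n + 1) ≤ r ^ m := pow_le_pow_of_le_one (le_of_lt hr0) (le_of_lt hr1) (by omega)
    calc ((n : ℝ) + 1) * (r ^ (n + 1) * (1 - p) ^ (n + 1))
        = (((n : ℝ) + 1) * r ^ (n + 1)) * (1 - p) ^ (n + 1) := by ring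
      _ ≤ (((n : ℝ) + 1) ^ N * r ^ m) * (1 - p) ^ (n + 1) := by
          apply mul_le_mul_of_nonneg_right _ hq1
          exact mul_le_mul t1 t2 (pow_nonneg (le_of_lt hr0) _) (by positivity)
      _ = ((n : ℝ) + 1) ^ N * r ^ m * (1 - p) ^ (n + 1) := by ring
  have hE2 : (N : ℝ) * (((n : ℝ) + 1) ^ (N - 1) * p ^ (m + 2) * (n : ℝ))
      ≤ ((N : ℝ) / (1 - p) ^ (N - 1)) * (((n : ℝ) + 1) ^ N * r ^ m * (1 - p) ^ (n + 1)) := by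
    have hqsplit : (1 - p) ^ (n + 1) = (1 - p) ^ (m + 2) * (1 - p) ^ (N - 1) := by
      rw [← pow_add]
      congr 1
      omega
    have hpeq2 : p ^ (m + 2) = r ^ (m + 2) * (1 - p) ^ (m + 2) := by
      rw [← mul_pow]
      congr 1
      rw [hrdef]
      field_simp
    have hqN : (0 : ℝ) < (1 - p) ^ (N - 1) := pow_pos hq0 _
    have hR : ((N : ℝ) / (1 - p) ^ (N - 1)) * (((n : ℝ) + 1) ^ N * r ^ m * (1 - p) ^ (n + 1))
        = (N : ℝ) * (((n : ℝ) + 1) ^ N * r ^ m * (1 - p) ^ (m + 2)) := by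
      rw [hqsplit]
      field_simp
    rw [hR, hpeq2]
    apply mul_le_mul_of_nonneg_left _ (Nat.cast_nonneg N)
    have t3 : ((n : ℝ) + 1) ^ (N - 1) * (n : ℝ) ≤ ((n : ℝ) + 1) ^ N := by
      have he : ((n : ℝ) + 1) ^ N = ((n : ℝ) + 1) ^ (N - 1) * ((n : ℝ) + 1) := by
        rw [← pow_succ]
        congr 1
        omega
      rw [he]
      apply mul_le_mul_of_nonneg_left _ (by positivity)
      have := Nat.cast_nonneg (α := ℝ) n
      linarith
    have t4 : r ^ (m + 2) ≤ r ^ m := pow_le_pow_of_le_one (le_of_lt hr0) (le_of_lt hr1) (by omega)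
    calc ((n : ℝ) + 1) ^ (N - 1) * (r ^ (m + 2) * (1 - p) ^ (m + 2)) * (n : ℝ)
        = (((n : ℝ) + 1) ^ (N - 1) * (n : ℝ)) * r ^ (m + 2) * (1 - p) ^ (m + 2) := by ring
      _ ≤ (((n : ℝ) + 1) ^ N * r ^ m) * (1 - p) ^ (m + 2) := by
          apply mul_le_mul_of_nonneg_right _ (by positivity)
          exact mul_le_mul t3 t4 (by positivity) (by positivity)
      _ = ((n : ℝ) + 1) ^ N * r ^ m * (1 - p) ^ (m + 2) := by ring
  -- expand products for linarith
  have hexp1 : (1 - p ^ (n + 1) - (1 - p) ^ (n + 1)) * (v p n + 1)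
      = (v p n + 1) - (v p n + 1) * p ^ (n + 1) - (v p n + 1) * (1 - p) ^ (n + 1) := by ring
  have hexp2 : (v p n + 1) * (1 - p) ^ (n + 1) = v p n * (1 - p) ^ (n + 1) + (1 - p) ^ (n + 1) := by
    ring
  have hvp : 0 ≤ (v p n + 1) * p ^ (n + 1) := by positivity
  have hfin : (1 + (N : ℝ) / (1 - p) ^ (N - 1)) * (((n : ℝ) + 1) ^ N * r ^ m) * (1 - p) ^ (n + 1)
      < 1 * (1 - p) ^ (n + 1) :=
    mul_lt_mul_of_pos_right hmkey (pow_pos hq0 _)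
  have hexp3 : (1 + (N : ℝ) / (1 - p) ^ (N - 1)) * (((n : ℝ) + 1) ^ N * r ^ m) * (1 - p) ^ (n + 1)
      = ((n : ℝ) + 1) ^ N * r ^ m * (1 - p) ^ (n + 1)
        + ((N : ℝ) / (1 - p) ^ (N - 1)) * (((n : ℝ) + 1) ^ N * r ^ m * (1 - p) ^ (n + 1)) := by
    ring
  rw [hexp3] at hfin
  rw [hsplit] at hstep
  linarith

theorem coin_game_infinitely_many_decreases (p : ℝ) (hp1 : 0 < p) (hp2 : p < 1 / 2) :
    {n : ℕ | 1 ≤ n ∧ v p n < v p (n - 1) + 1}.Infinite := by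
  by_contra hfin
  rw [Set.not_infinite] at hfin
  obtain ⟨N0, hN0⟩ := hfin.bddAbove
  apply key p hp1 hp2 (N0 + 1) (by omega)
  intro n hn
  by_contra hlt
  push_neg at hlt
  have hmem : n ∈ {n : ℕ | 1 ≤ n ∧ v p n < v p (n - 1) + 1} := ⟨by omega, hlt⟩
  have := hN0 hmem
  omega
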